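/- Let ξ₀ ∈ ℝⁿ and let δ, ε > 0. Let F̄ denote the closure in (ℝⁿ × ℝⁿ) × (ℝⁿ × ℝⁿ) of the set F = {((x,ξ),(x',ξ')) : δ ≥ ⟨ξ₀, x' − x⟩ > ε·(|x' − x| + |ξ' − ξ|)}. Then the restriction to F̄ of the map ((x,ξ),(x',ξ')) ↦ (⟨ξ₀, x⟩, (x', ξ')) ∈ ℝ × (ℝⁿ × ℝⁿ) is a proper map, i.e. the preimage in F̄ of every compact subset of ℝ × (ℝⁿ × ℝⁿ) is compact. -/

import Mathlib

theorem stmt_5 {n : ℕ} (ξ₀ : EuclideanSpace ℝ (Fin n)) (δ ε : ℝ)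
    (hδ : 0 < δ) (hε : 0 < ε)
    (F : Set ((EuclideanSpace ℝ (Fin n) × EuclideanSpace ℝ (Fin n)) ×
              (EuclideanSpace ℝ (Fin n) × EuclideanSpace ℝ (Fin n))))
    (hF : F = {p | (inner ℝ ξ₀ (p.2.1 - p.1.1) : ℝ) ≤ δ ∧
        ε * (‖p.2.1 - p.1.1‖ + ‖p.2.2 - p.1.2‖) < (inner ℝ ξ₀ (p.2.1 - p.1.1) : ℝ)})
    (K : Set (ℝ × (EuclideanSpace ℝ (Fin n) × EuclideanSpace ℝ (Fin n))))
    (hK : IsCompact K) :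
    IsCompact {p ∈ closure F | ((inner ℝ ξ₀ p.1.1 : ℝ), p.2) ∈ K} := by
  have hinner : Continuous (fun p : (EuclideanSpace ℝ (Fin n) × EuclideanSpace ℝ (Fin n)) × (EuclideanSpace ℝ (Fin n) × EuclideanSpace ℝ (Fin n)) => (inner ℝ ξ₀ (p.2.1 - p.1.1) : ℝ)) :=
    continuous_const.inner ((continuous_fst.comp continuous_snd).sub
      (continuous_fst.comp continuous_fst))
  have hcont2 : Continuous (fun p : (EuclideanSpace ℝ (Fin n) × EuclideanSpace ℝ (Fin n)) × (EuclideanSpace ℝ (Fin n) × EuclideanSpace ℝ (Fin n)) =>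
      ε * (‖p.2.1 - p.1.1‖ + ‖p.2.2 - p.1.2‖)) := by fun_prop
  set S : Set ((EuclideanSpace ℝ (Fin n) × EuclideanSpace ℝ (Fin n)) × (EuclideanSpace ℝ (Fin n) × EuclideanSpace ℝ (Fin n))) :=
    {p | ε * (‖p.2.1 - p.1.1‖ + ‖p.2.2 - p.1.2‖) ≤ (inner ℝ ξ₀ (p.2.1 - p.1.1) : ℝ)} ∩
    {p | (inner ℝ ξ₀ (p.2.1 - p.1.1) : ℝ) ≤ δ} with hS
  have hSclosed : IsClosed S :=
    (isClosed_le hcont2 hinner).inter (isClosed_le hinner continuous_const)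
  have hFS : closure F ⊆ S := by
    apply closure_minimal _ hSclosed
    rw [hF]
    intro p hp
    exact ⟨hp.2.le, hp.1⟩
  have hmap : Continuous (fun p : (EuclideanSpace ℝ (Fin n) × EuclideanSpace ℝ (Fin n)) × (EuclideanSpace ℝ (Fin n) × EuclideanSpace ℝ (Fin n)) => ((inner ℝ ξ₀ p.1.1 : ℝ), p.2)) :=
    (continuous_const.inner (continuous_fst.comp continuous_fst)).prodMk continuous_snd
  have hset : {p ∈ closure F | ((inner ℝ ξ₀ p.1.1 : ℝ), p.2) ∈ K} =
      closure F ∩ (fun p : (EuclideanSpace ℝ (Fin n) × EuclideanSpace ℝ (Fin n)) × (EuclideanSpace ℝ (Fin n) × EuclideanSpace ℝ (Fin n)) => ((inner ℝ ξ₀ p.1.1 : ℝ), p.2)) ⁻¹' K := rfl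
  rw [hset]
  apply Metric.isCompact_of_isClosed_isBounded
  · exact isClosed_closure.inter (hK.isClosed.preimage hmap)
  · obtain ⟨C, hC⟩ := Bornology.IsBounded.exists_norm_le hK.isBounded
    rw [isBounded_iff_forall_norm_le]
    refine ⟨C + δ / ε, fun p hp => ?_⟩
    obtain ⟨hp1, hp2⟩ := hp
    obtain ⟨h1, h2⟩ := hFS hp1
    simp only [Set.mem_setOf_eq] at h1 h2
    have hδε : (0:ℝ) ≤ δ / ε := le_of_lt (div_pos hδ hε)
    have hCle : ‖((inner ℝ ξ₀ p.1.1 : ℝ), p.2)‖ ≤ C := hC _ hp2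
    have hC2 : ‖p.2‖ ≤ C := le_trans (norm_snd_le ((inner ℝ ξ₀ p.1.1 : ℝ), p.2)) hCle
    have h21 : ‖p.2.1‖ ≤ C := le_trans (norm_fst_le _) hC2
    have h22 : ‖p.2.2‖ ≤ C := le_trans (norm_snd_le _) hC2
    have hsum : ‖p.2.1 - p.1.1‖ + ‖p.2.2 - p.1.2‖ ≤ δ / ε := by
      rw [le_div_iff₀ hε]
      nlinarith [h1, h2]
    have ha : ‖p.2.1 - p.1.1‖ ≤ δ / ε := by
      nlinarith [norm_nonneg (p.2.2 - p.1.2)]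
    have hb : ‖p.2.2 - p.1.2‖ ≤ δ / ε := by
      nlinarith [norm_nonneg (p.2.1 - p.1.1)]
    have h11 : ‖p.1.1‖ ≤ C + δ / ε := by
      have h := norm_sub_norm_le p.1.1 p.2.1
      rw [norm_sub_rev] at h
      linarith
    have h12 : ‖p.1.2‖ ≤ C + δ / ε := by
      have h := norm_sub_norm_le p.1.2 p.2.2
      rw [norm_sub_rev] at h
      linarith
    have hC0 : (0:ℝ) ≤ C := le_trans (norm_nonneg _) hC2
    rw [Prod.norm_def]
    apply max_le
    · rw [Prod.norm_def]; exact max_le h11 h12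
    · rw [Prod.norm_def]; exact max_le (by linarith) (by linarith)
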